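/- arXiv:2403.12652 — 4 statements merged into one kernel-verified Lean document; each statement's English description precedes it below -/
import Mathlib

section
/- Let f : 𝕋 → ℝ be a C¹ function on the one-dimensional torus that is positive and bounded away from 0, and let β ∈ (-1/2, 1) and ϑ > 2. Then sup_{x∈𝕋} f(x)^{β-ϑ} ≤ ((β-ϑ)²/2) ∫_𝕋 f^{β-ϑ-2} (f')² dx + 2 (∫_𝕋 f dx)^{β-ϑ}. -/
open Real MeasureTheory Set

private lemma amgm_aux (γ A B D : ℝ) :
    D * -γ * (A * B) ≤ γ ^ 2 / 2 * (A ^ 2 * D ^ 2) + 1 / 2 * B ^ 2 := by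
  nlinarith [sq_nonneg (γ * A * D + B)]

/-- for a positive C¹ function on the torus (represented as a 1-periodic
function on ℝ), `sup f^(β-ϑ) ≤ ((β-ϑ)²/2) ∫ f^(β-ϑ-2) (f')² + 2 (∫ f)^(β-ϑ)`. -/
theorem stmt0 (β ϑ : ℝ) (hβ : β ∈ Set.Ioo (-(1:ℝ)/2) 1) (hϑ : 2 < ϑ)
    (f : ℝ → ℝ) (hf : ContDiff ℝ 1 f) (hper : Function.Periodic f 1)
    (hpos : ∃ c > 0, ∀ x, c ≤ f x) :
    ∀ x : ℝ, f x ^ (β - ϑ) ≤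
      ((β - ϑ) ^ 2 / 2) * (∫ x in (0:ℝ)..1, f x ^ (β - ϑ - 2) * (deriv f x) ^ 2)
        + 2 * (∫ x in (0:ℝ)..1, f x) ^ (β - ϑ) := by
  obtain ⟨c, hc, hcf⟩ := hpos
  set γ : ℝ := β - ϑ with hγdef
  have hγ : γ < 0 := by have := hβ.2; simp only [hγdef]; linarith
  have hfpos : ∀ x, 0 < f x := fun x => lt_of_lt_of_le hc (hcf x)
  have hfc : Continuous f := hf.continuous
  have hdc : Continuous (deriv f) := hf.continuous_deriv le_rfl
  have hfne : ∀ x, f x ≠ 0 := fun x => (hfpos x).ne'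
  -- the function g = f^γ and its derivative
  set g : ℝ → ℝ := fun x => f x ^ γ with hg
  set g' : ℝ → ℝ := fun x => deriv f x * γ * f x ^ (γ - 1) with hg'
  have hgderiv : ∀ x, HasDerivAt g (g' x) x := fun x =>
    ((hf.differentiable one_ne_zero x).hasDerivAt).rpow_const (Or.inl (hfne x))
  have hrc : ∀ (p : ℝ), Continuous fun x => f x ^ p := fun p =>
    hfc.rpow_const (fun x => Or.inl (hfne x))
  have hg'cont : Continuous g' := (hdc.mul continuous_const).mul (hrc _)
  have hgcont : Continuous g := hrc _
  -- periodicity of deriv f, g, g'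
  have hdper : Function.Periodic (deriv f) 1 := by
    intro x
    have : f = fun y => f (y + 1) := funext fun y => (hper y).symm
    conv_lhs => rw [show deriv f (x + 1) = deriv (fun y => f (y + 1)) x from
      (deriv_comp_add_const ..).symm]
    rw [← this]
  have hgper : Function.Periodic g 1 := fun x => by simp only [hg, hper x]
  have hg'per : Function.Periodic g' 1 := fun x => by
    simp only [hg', hdper x, hper x]
  -- minimum point of f on [0,1]
  obtain ⟨x₀, hx₀mem, hx₀⟩ := isCompact_Icc.exists_isMinOn (α := ℝ)
    (Set.nonempty_Icc.2 zero_le_one) hfc.continuousOn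
  -- x₀ is a global minimum
  have hx₀glob : ∀ x, f x₀ ≤ f x := by
    intro x
    have h1 : f (x - (⌊x⌋ : ℝ) * 1) = f x := hper.sub_int_mul_eq ⌊x⌋
    have h2 : x - (⌊x⌋ : ℝ) * 1 ∈ Set.Icc (0:ℝ) 1 := by
      constructor
      · have := Int.floor_le x; linarith
      · have := Int.lt_floor_add_one x; linarith
    calc f x₀ ≤ f (x - (⌊x⌋ : ℝ) * 1) := hx₀ h2
      _ = f x := h1
  -- maximum point of f on [x₀, x₀+1]
  obtain ⟨y, hymem, hy⟩ := isCompact_Icc.exists_isMaxOn (α := ℝ)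
    (Set.nonempty_Icc.2 (by linarith : x₀ ≤ x₀ + 1)) hfc.continuousOn
  set J : ℝ := ∫ x in (0:ℝ)..1, f x with hJdef
  set I : ℝ := ∫ x in (0:ℝ)..1, f x ^ (γ - 2) * (deriv f x) ^ 2 with hIdef
  set K : ℝ := ∫ x in (0:ℝ)..1, f x ^ γ with hKdef
  -- J ≥ c > 0
  have hJpos : 0 < J := by
    have : c * (1 - 0) ≤ J := by
      rw [hJdef]
      calc c * (1 - 0) = ∫ _ in (0:ℝ)..1, c := by simp
        _ ≤ ∫ x in (0:ℝ)..1, f x := by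
          apply intervalIntegral.integral_mono_on zero_le_one
            (intervalIntegrable_const) (hfc.intervalIntegrable 0 1)
          intro x _; exact hcf x
    linarith
  -- J ≤ f y
  have hJle : J ≤ f y := by
    have h1 : J = ∫ x in x₀..(x₀+1), f x := by
      rw [hJdef]
      have := hper.intervalIntegral_add_eq x₀ 0
      simpa using this.symm
    have h2 : (∫ x in x₀..(x₀+1), f x) ≤ ∫ _ in x₀..(x₀+1), f y := by
      apply intervalIntegral.integral_mono_on (by linarith)
        (hfc.intervalIntegrable _ _) intervalIntegrable_const
      intro x hx; exact hy hx
    simp at h2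
    linarith [h1 ▸ h2]
  have hgy : g y ≤ J ^ γ := Real.rpow_le_rpow_of_nonpos hJpos hJle hγ.le
  -- FTC pieces
  have hftc : ∀ a b : ℝ, (∫ x in a..b, g' x) = g b - g a := fun a b =>
    intervalIntegral.integral_eq_sub_of_hasDerivAt (fun x _ => hgderiv x)
      (hg'cont.intervalIntegrable a b)
  have habs : ∀ a b : ℝ, a ≤ b → |g b - g a| ≤ ∫ x in a..b, |g' x| := by
    intro a b hab
    have h1 := intervalIntegral.abs_integral_le_integral_abs (f := g') (μ := volume) hab
    rwa [hftc a b] at h1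
  have h1 : g x₀ - g y ≤ ∫ x in x₀..y, |g' x| := by
    have := habs x₀ y hymem.1
    have h2 := (abs_le.1 this).1
    linarith
  have h2 : g x₀ - g y ≤ ∫ x in y..(x₀+1), |g' x| := by
    have := habs y (x₀ + 1) hymem.2
    rw [show g (x₀ + 1) = g x₀ from hgper x₀] at this
    linarith [(abs_le.1 this).2]
  have hsplit : (∫ x in x₀..y, |g' x|) + (∫ x in y..(x₀+1), |g' x|)
      = ∫ x in (0:ℝ)..1, |g' x| := by
    rw [intervalIntegral.integral_add_adjacent_intervals
      ((hg'cont.abs).intervalIntegrable _ _) ((hg'cont.abs).intervalIntegrable _ _)]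
    have habsper : Function.Periodic (fun x => |g' x|) 1 := fun x => by simp [hg'per x]
    have := habsper.intervalIntegral_add_eq x₀ 0
    simpa using this
  -- pointwise bound on |g'|
  have hpoint : ∀ x, |g' x| ≤ γ ^ 2 / 2 * (f x ^ (γ - 2) * (deriv f x) ^ 2)
      + 1 / 2 * f x ^ γ := by
    intro x
    set A : ℝ := f x ^ ((γ - 2) / 2) with hA
    set B : ℝ := f x ^ (γ / 2) with hB
    have hApos : 0 < A := Real.rpow_pos_of_pos (hfpos x) _
    have hBpos : 0 < B := Real.rpow_pos_of_pos (hfpos x) _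
    have hA2 : A ^ 2 = f x ^ (γ - 2) := by
      rw [hA, ← Real.rpow_natCast (f x ^ ((γ - 2) / 2)) 2, ← Real.rpow_mul (hfpos x).le]
      norm_num
    have hB2 : B ^ 2 = f x ^ γ := by
      rw [hB, ← Real.rpow_natCast (f x ^ (γ / 2)) 2, ← Real.rpow_mul (hfpos x).le]
      norm_num
    have hAB : A * B = f x ^ (γ - 1) := by
      rw [hA, hB, ← Real.rpow_add (hfpos x)]; ring_nf
    have habs' : |g' x| = |deriv f x| * |γ| * f x ^ (γ - 1) := by
      rw [hg']
      rw [abs_mul, abs_mul, abs_of_pos (Real.rpow_pos_of_pos (hfpos x) _)]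
    rw [habs', ← hAB, ← hA2, ← hB2, abs_of_neg hγ, ← sq_abs (deriv f x)]
    exact amgm_aux γ A B |deriv f x|
  -- integral bound
  have hintbound : (∫ x in (0:ℝ)..1, |g' x|) ≤ γ ^ 2 / 2 * I + 1 / 2 * K := by
    have h3 : (∫ x in (0:ℝ)..1, |g' x|) ≤
        ∫ x in (0:ℝ)..1, (γ ^ 2 / 2 * (f x ^ (γ - 2) * (deriv f x) ^ 2) + 1 / 2 * f x ^ γ) := by
      apply intervalIntegral.integral_mono_on zero_le_one
        ((hg'cont.abs).intervalIntegrable _ _)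
        (((continuous_const.mul ((hrc _).mul (hdc.pow 2))).add (continuous_const.mul (hrc _))).intervalIntegrable 0 1)
      intro x _; exact hpoint x
    rw [intervalIntegral.integral_add
        (f := fun x => γ ^ 2 / 2 * (f x ^ (γ - 2) * (deriv f x) ^ 2)) (g := fun x => 1 / 2 * f x ^ γ)
        ((continuous_const.mul ((hrc _).mul (hdc.pow 2))).intervalIntegrable _ _)
        ((continuous_const.mul (hrc _)).intervalIntegrable _ _),
      intervalIntegral.integral_const_mul, intervalIntegral.integral_const_mul] at h3
    exact h3
  -- K ≤ g x₀
  have hK : K ≤ g x₀ := by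
    have : K ≤ ∫ _ in (0:ℝ)..1, g x₀ := by
      apply intervalIntegral.integral_mono_on zero_le_one
        ((hrc _).intervalIntegrable _ _) intervalIntegrable_const
      intro x hx
      exact Real.rpow_le_rpow_of_nonpos (hfpos x₀) (hx₀ hx) hγ.le
    simpa using this
  have hI : 0 ≤ I := by
    rw [hIdef]
    apply intervalIntegral.integral_nonneg zero_le_one
    intro x _
    exact mul_nonneg (Real.rpow_pos_of_pos (hfpos x) _).le (sq_nonneg _)
  have hJγ : 0 < J ^ γ := Real.rpow_pos_of_pos hJpos _
  have hγI : 0 ≤ γ ^ 2 * I := mul_nonneg (sq_nonneg _) hI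
  intro x
  have hx : f x ^ γ ≤ g x₀ := Real.rpow_le_rpow_of_nonpos (hfpos x₀) (hx₀glob x) hγ.le
  -- combine everything
  have hM : g x₀ ≤ γ ^ 2 / 2 * I + 2 * J ^ γ := by
    nlinarith [h1, h2, hsplit, hintbound, hK, hgy, hγI, hJγ.le]
  calc f x ^ γ ≤ g x₀ := hx
    _ ≤ γ ^ 2 / 2 * I + 2 * J ^ γ := hM
end

section
/- Let f : 𝕋 → ℝ be a C¹ function on the one-dimensional torus that is positive and bounded away from 0, and let β ∈ (-1/2, 1). Then there is a constant C depending only on β such that sup_{x∈𝕋} f(x)^{β+5} ≤ C [ (∫_𝕋 f^{β-2} (f')⁴ dx) (∫_𝕋 f dx)³ + (∫_𝕋 f dx)^{β+5} ]. -/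
open Real MeasureTheory Set

private lemma memLp_aux {u : ℝ → ℝ} (hu : Continuous u) (p : ENNReal) :
    MemLp u p (volume.restrict (Set.Ioc (0:ℝ) 1)) := by
  haveI : IsFiniteMeasure (volume.restrict (Set.Ioc (0:ℝ) 1)) :=
    ⟨by simp [Real.volume_Ioc]⟩
  obtain ⟨C, hC⟩ := (isCompact_Icc (a := (0:ℝ)) (b := 1)).exists_bound_of_continuousOn
    hu.continuousOn
  refine MemLp.of_bound hu.aestronglyMeasurable C ?_
  filter_upwards [ae_restrict_mem measurableSet_Ioc] with t ht
  exact hC t (Ioc_subset_Icc_self ht)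

/-- `sup f^(β+5) ≤ C [ (∫ f^(β-2) (f')⁴)(∫ f)³ + (∫ f)^(β+5) ]` with `C = C(β)`. -/
theorem stmt1 (β : ℝ) (hβ : β ∈ Set.Ioo (-(1:ℝ)/2) 1) :
    ∃ C > (0:ℝ), ∀ f : ℝ → ℝ, ContDiff ℝ 1 f → Function.Periodic f 1 →
      (∃ c > 0, ∀ x, c ≤ f x) →
      ∀ x : ℝ, f x ^ (β + 5) ≤
        C * ((∫ x in (0:ℝ)..1, f x ^ (β - 2) * (deriv f x) ^ 4) * (∫ x in (0:ℝ)..1, f x) ^ 3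
          + (∫ x in (0:ℝ)..1, f x) ^ (β + 5)) := by
  obtain ⟨hβ1, hβ2⟩ := hβ
  set θ : ℝ := (β+5)/4 with hθdef
  have hβ5 : (0:ℝ) < β + 5 := by linarith
  have hθ : 0 < θ := by positivity
  refine ⟨8*(1+θ^4), by positivity, ?_⟩
  intro f hf hper hpos x
  obtain ⟨c, hc, hcf⟩ := hpos
  have hfpos : ∀ t, 0 < f t := fun t => lt_of_lt_of_le hc (hcf t)
  have hfc : Continuous f := hf.continuous
  have hf'c : Continuous (deriv f) := hf.continuous_deriv le_rfl
  set A := ∫ t in (0:ℝ)..1, f t ^ (β - 2) * (deriv f t) ^ 4 with hAdef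
  set M := ∫ t in (0:ℝ)..1, f t with hMdef
  have hA : 0 ≤ A :=
    intervalIntegral.integral_nonneg zero_le_one fun u _ =>
      mul_nonneg (Real.rpow_nonneg (hfpos u).le _) (by positivity)
  have hM : 0 < M := by
    have h1 : (c:ℝ) = ∫ _ in (0:ℝ)..1, c := by simp
    have h2 : (∫ _ in (0:ℝ)..1, c) ≤ M :=
      intervalIntegral.integral_mono_on zero_le_one intervalIntegrable_const
        (hfc.intervalIntegrable 0 1) (fun z _ => hcf z)
    linarith
  obtain ⟨y, hy01, hymin⟩ := isCompact_Icc.exists_isMinOn (Set.nonempty_Icc.2 zero_le_one)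
    hfc.continuousOn
  have hyM : f y ≤ M := by
    have h1 : f y = ∫ _ in (0:ℝ)..1, f y := by simp
    have h2 : (∫ _ in (0:ℝ)..1, f y) ≤ M :=
      intervalIntegral.integral_mono_on zero_le_one intervalIntegrable_const
        (hfc.intervalIntegrable 0 1) (fun z hz => hymin hz)
    linarith
  set G : ℝ → ℝ := fun t => deriv f t * θ * f t ^ (θ - 1) with hGdef
  have hG : ∀ t : ℝ, HasDerivAt (fun s => f s ^ θ) (G t) t := fun t =>
    ((hf.differentiable one_ne_zero t).hasDerivAt).rpow_const (Or.inl (hfpos t).ne')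
  have hGc : Continuous G :=
    (hf'c.mul continuous_const).mul (hfc.rpow_const fun t => Or.inl (hfpos t).ne')
  have hftc : ∀ a b : ℝ, f b ^ θ - f a ^ θ = ∫ t in a..b, G t := fun a b =>
    (intervalIntegral.integral_eq_sub_of_hasDerivAt (fun t _ => hG t)
      (hGc.intervalIntegrable a b)).symm
  -- Hölder
  have holder : (∫ t in (0:ℝ)..1, f t ^ (θ - 1) * |deriv f t|) ≤
      A ^ ((1:ℝ)/4) * M ^ ((3:ℝ)/4) := by
    set u : ℝ → ℝ := fun t => f t ^ ((β-2)/4) * |deriv f t| with hudef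
    set v : ℝ → ℝ := fun t => f t ^ ((3:ℝ)/4) with hvdef
    have hu : Continuous u :=
      (hfc.rpow_const fun t => Or.inl (hfpos t).ne').mul hf'c.abs
    have hv : Continuous v := hfc.rpow_const fun t => Or.inl (hfpos t).ne'
    have hpq : (4:ℝ).HolderConjugate (4/3) := ⟨by norm_num, by norm_num, by norm_num⟩
    have h := MeasureTheory.integral_mul_le_Lp_mul_Lq_of_nonneg
      (μ := volume.restrict (Set.Ioc (0:ℝ) 1)) hpq
      (Filter.Eventually.of_forall fun t =>
        mul_nonneg (Real.rpow_nonneg (hfpos t).le _) (abs_nonneg _))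
      (Filter.Eventually.of_forall fun t => Real.rpow_nonneg (hfpos t).le _)
      (memLp_aux hu _) (memLp_aux hv _)
    have e1 : (∫ t in Set.Ioc (0:ℝ) 1, u t * v t) =
        ∫ t in (0:ℝ)..1, f t ^ (θ - 1) * |deriv f t| := by
      rw [intervalIntegral.integral_of_le zero_le_one]
      refine setIntegral_congr_fun measurableSet_Ioc fun t _ => ?_
      have h2 : f t ^ ((β-2)/4) * f t ^ ((3:ℝ)/4) = f t ^ (θ - 1) := by
        rw [← Real.rpow_add (hfpos t), hθdef]; ring_nf
      calc u t * v t = f t ^ ((β-2)/4) * f t ^ ((3:ℝ)/4) * |deriv f t| := by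
            simp only [hudef, hvdef]; ring
        _ = f t ^ (θ - 1) * |deriv f t| := by rw [h2]
    have e2 : (∫ t in Set.Ioc (0:ℝ) 1, u t ^ (4:ℝ)) = A := by
      rw [hAdef, intervalIntegral.integral_of_le zero_le_one]
      refine setIntegral_congr_fun measurableSet_Ioc fun t _ => ?_
      have h1 : (0:ℝ) ≤ f t ^ ((β-2)/4) := Real.rpow_nonneg (hfpos t).le _
      show (f t ^ ((β-2)/4) * |deriv f t|) ^ (4:ℝ) = _
      rw [Real.mul_rpow h1 (abs_nonneg _), ← Real.rpow_mul (hfpos t).le,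
        show (β-2)/4*4 = β-2 by ring,
        show ((4:ℝ)) = ((4:ℕ):ℝ) from by norm_num, Real.rpow_natCast,
        pow_abs, abs_of_nonneg (by positivity : (0:ℝ) ≤ deriv f t ^ 4)]
    have e3 : (∫ t in Set.Ioc (0:ℝ) 1, v t ^ ((4:ℝ)/3)) = M := by
      rw [hMdef, intervalIntegral.integral_of_le zero_le_one]
      refine setIntegral_congr_fun measurableSet_Ioc fun t _ => ?_
      show (f t ^ ((3:ℝ)/4)) ^ ((4:ℝ)/3) = f t
      rw [← Real.rpow_mul (hfpos t).le]
      norm_num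
    rw [e1, e2, e3] at h
    have h34 : (1:ℝ)/(4/3) = 3/4 := by norm_num
    rw [h34] at h
    exact h
  -- key pointwise bound on [0,1]
  have key : ∀ z ∈ Icc (0:ℝ) 1,
      f z ^ θ ≤ M ^ θ + θ * (A ^ ((1:ℝ)/4) * M ^ ((3:ℝ)/4)) := by
    intro z hz
    have habs : ∀ t, |G t| = θ * (f t ^ (θ-1) * |deriv f t|) := by
      intro t
      simp only [hGdef]
      rw [abs_mul, abs_mul, abs_of_pos hθ,
        abs_of_pos (Real.rpow_pos_of_pos (hfpos t) _)]
      ring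
    have h2 : (∫ t in y..z, G t) ≤ θ * (A ^ ((1:ℝ)/4) * M ^ ((3:ℝ)/4)) := by
      have hsub : Set.uIoc y z ⊆ Ioc (0:ℝ) 1 := by
        rw [Set.uIoc]
        exact Ioc_subset_Ioc (le_min hy01.1 hz.1) (max_le hy01.2 hz.2)
      calc (∫ t in y..z, G t) ≤ |∫ t in y..z, G t| := le_abs_self _
        _ ≤ ∫ t in Set.uIoc y z, |G t| := by
            simpa [Real.norm_eq_abs] using
              intervalIntegral.norm_integral_le_integral_norm_uIoc (a := y) (b := z)
                (f := G) (μ := volume)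
        _ ≤ ∫ t in Ioc (0:ℝ) 1, |G t| := by
            refine setIntegral_mono_set (hGc.abs.integrableOn_Ioc)
              (Filter.Eventually.of_forall fun t => abs_nonneg _) hsub.eventuallyLE
        _ = ∫ t in (0:ℝ)..1, |G t| := (intervalIntegral.integral_of_le zero_le_one).symm
        _ = θ * ∫ t in (0:ℝ)..1, f t ^ (θ-1) * |deriv f t| := by
            rw [← intervalIntegral.integral_const_mul]
            exact intervalIntegral.integral_congr fun t _ => habs t
        _ ≤ θ * (A ^ ((1:ℝ)/4) * M ^ ((3:ℝ)/4)) :=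
            mul_le_mul_of_nonneg_left holder hθ.le
    have h1 := hftc y z
    have h3 : f y ^ θ ≤ M ^ θ := Real.rpow_le_rpow (hfpos y).le hyM hθ.le
    linarith
  -- reduce to [0,1] by periodicity
  have hfract : f (Int.fract x) = f x := by
    rw [← Int.self_sub_floor]
    simpa using hper.sub_int_mul_eq (x := x) ⌊x⌋
  have hxIcc : Int.fract x ∈ Icc (0:ℝ) 1 := ⟨Int.fract_nonneg x, (Int.fract_lt_one x).le⟩
  have hkey := key _ hxIcc
  rw [hfract] at hkey
  set a := M ^ θ with hadef
  set b := θ * (A ^ ((1:ℝ)/4) * M ^ ((3:ℝ)/4)) with hbdef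
  have ha : 0 ≤ a := Real.rpow_nonneg hM.le θ
  have hb : 0 ≤ b := by
    have := Real.rpow_nonneg hA ((1:ℝ)/4)
    have := Real.rpow_nonneg hM.le ((3:ℝ)/4)
    rw [hbdef]; positivity
  have h4 : (f x ^ θ)^(4:ℕ) ≤ (a + b)^(4:ℕ) :=
    pow_le_pow_left₀ (Real.rpow_nonneg (hfpos x).le θ) hkey 4
  have e4 : (f x ^ θ)^(4:ℕ) = f x ^ (β+5) := by
    rw [← Real.rpow_natCast (f x ^ θ) 4, ← Real.rpow_mul (hfpos x).le]
    have : θ * ((4:ℕ):ℝ) = β + 5 := by rw [hθdef]; push_cast; ring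
    rw [this]
  have e5 : a^(4:ℕ) = M ^ (β+5) := by
    rw [hadef, ← Real.rpow_natCast (M ^ θ) 4, ← Real.rpow_mul hM.le]
    have : θ * ((4:ℕ):ℝ) = β + 5 := by rw [hθdef]; push_cast; ring
    rw [this]
  have e6 : b^(4:ℕ) = θ^4 * (A * M^3) := by
    have eA : (A ^ ((1:ℝ)/4))^(4:ℕ) = A := by
      rw [← Real.rpow_natCast (A ^ ((1:ℝ)/4)) 4, ← Real.rpow_mul hA]
      norm_num
    have eM : (M ^ ((3:ℝ)/4))^(4:ℕ) = M^3 := by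
      rw [← Real.rpow_natCast (M ^ ((3:ℝ)/4)) 4, ← Real.rpow_mul hM.le]
      have : (3:ℝ)/4 * ((4:ℕ):ℝ) = ((3:ℕ):ℝ) := by push_cast; ring
      rw [this, Real.rpow_natCast]
    calc b^(4:ℕ) = θ^4 * ((A^((1:ℝ)/4))^(4:ℕ) * (M^((3:ℝ)/4))^(4:ℕ)) := by
          rw [hbdef]; ring
      _ = θ^4 * (A * M^3) := by rw [eA, eM]
  have h5 : (a+b)^(4:ℕ) ≤ 8*(a^4 + b^4) := by
    nlinarith [sq_nonneg (a-b), sq_nonneg (a+b), sq_nonneg (a^2-b^2), sq_nonneg (a^2+b^2),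
      mul_nonneg ha hb, sq_nonneg a, sq_nonneg b]
  have hAM : 0 ≤ A * M^3 := by positivity
  have hM5 : 0 ≤ M ^ (β+5) := Real.rpow_nonneg hM.le _
  calc f x ^ (β+5) = (f x ^ θ)^(4:ℕ) := e4.symm
    _ ≤ (a+b)^(4:ℕ) := h4
    _ ≤ 8*(a^4 + b^4) := h5
    _ = 8*M^(β+5) + 8*θ^4*(A*M^3) := by rw [e5, e6]; ring
    _ ≤ 8*(1+θ^4) * (A*M^3 + M^(β+5)) := by
        nlinarith [hAM, hM5, mul_nonneg (pow_nonneg hθ.le 4) hM5,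
          mul_nonneg (pow_nonneg hθ.le 4) hAM]
end

section
/- Let f : 𝕋 → ℝ be a C¹ function on the torus, positive and bounded away from 0. Define E(f) = ∫_𝕋 [ (1/2)|f'|² + φ(f) ] dx with φ ≥ 0. Then there is a universal constant C such that sup_{x∈𝕋} f(x)³ ≤ C ( E(f) · ∫_𝕋 f dx + (∫_𝕋 f dx)³ ). -/
open Real MeasureTheory Set

/-- `sup f³ ≤ C ( E(f) ∫ f + (∫ f)³ )` with a universal constant `C`, where
`E(f) = (1/2)∫ |f'|² + ∫ φ(f)` for any nonnegative potential `φ`. -/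
theorem stmt3 :
    ∃ C > (0:ℝ), ∀ φ : ℝ → ℝ, (∀ r > 0, 0 ≤ φ r) →
      ∀ f : ℝ → ℝ, ContDiff ℝ 1 f → Function.Periodic f 1 →
        (∃ c > 0, ∀ x, c ≤ f x) →
        ∀ x : ℝ, f x ^ 3 ≤
          C * (((1/2) * (∫ x in (0:ℝ)..1, (deriv f x) ^ 2) + (∫ x in (0:ℝ)..1, φ (f x)))
              * (∫ x in (0:ℝ)..1, f x)
            + (∫ x in (0:ℝ)..1, f x) ^ 3) := by
  refine ⟨18, by norm_num, ?_⟩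
  rintro φ hφ f hf hper ⟨c, hc, hcf⟩ x
  have hfc : Continuous f := hf.continuous
  have hf' : Continuous (deriv f) := hf.continuous_deriv le_rfl
  have hfpos : ∀ t, 0 < f t := fun t => lt_of_lt_of_le hc (hcf t)
  obtain ⟨x₀, hx₀mem, hx₀⟩ := isCompact_Icc.exists_isMaxOn (Set.nonempty_Icc.2 zero_le_one)
    hfc.continuousOn
  obtain ⟨y, hymem, hy⟩ := isCompact_Icc.exists_isMinOn (Set.nonempty_Icc.2 zero_le_one)
    hfc.continuousOn
  set M := f x₀ with hM
  set I := (∫ t in (0:ℝ)..1, f t) with hI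
  set D := (∫ t in (0:ℝ)..1, (deriv f t) ^ 2) with hD
  have hmax : ∀ t ∈ Icc (0:ℝ) 1, f t ≤ M := fun t ht => hx₀ ht
  have hmin : ∀ t ∈ Icc (0:ℝ) 1, f y ≤ f t := fun t ht => hy ht
  have hfint : IntervalIntegrable f volume 0 1 := hfc.intervalIntegrable _ _
  have hD0 : 0 ≤ D := intervalIntegral.integral_nonneg zero_le_one (fun u _ => sq_nonneg _)
  have hyI : f y ≤ I := by
    have : (∫ t in (0:ℝ)..1, f y) ≤ I := by
      apply intervalIntegral.integral_mono_on zero_le_one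
        (intervalIntegrable_const) hfint
      exact hmin
    simpa using this
  have hIpos : 0 < I := lt_of_lt_of_le (hfpos y) hyI
  have hMpos : 0 < M := hfpos x₀
  set a : ℝ := 3 * D + I ^ 2 with ha
  have hapos : 0 < a := by positivity
  -- the integrand bound
  have key : ∀ t ∈ Icc (0:ℝ) 1,
      |3 * f t ^ 2 * deriv f t| ≤ (3/2*a) * f t + (3/2*M^3/a) * (deriv f t)^2 := by
    intro t ht
    have hu := hfpos t
    have hu3 : f t ^ 3 ≤ M ^ 3 := pow_le_pow_left₀ hu.le (hmax t ht) 3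
    have expand : (3/2*a) * f t + (3/2*M^3/a) * (deriv f t)^2
        = (3*a*(a * f t) + 3*M^3*(deriv f t)^2) / (2*a) := by
      field_simp
    rw [expand, le_div_iff₀ (by positivity), abs_mul,
      abs_of_nonneg (by positivity : (0:ℝ) ≤ 3 * f t ^ 2)]
    have h1 : 0 ≤ f t * (a - f t * |deriv f t|)^2 := by positivity
    have h2 : 0 ≤ (M^3 - f t ^3) * (deriv f t)^2 :=
      mul_nonneg (sub_nonneg.2 hu3) (sq_nonneg _)
    have h3 : f t ^ 3 * |deriv f t| ^ 2 = f t ^ 3 * (deriv f t) ^ 2 := by rw [sq_abs]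
    nlinarith [abs_nonneg (deriv f t), hu.le, hapos.le]
  -- FTC
  have hd : ∀ t : ℝ, HasDerivAt (fun s => f s ^ 3) (3 * f t ^ 2 * deriv f t) t := by
    intro t
    have h := ((hf.differentiable one_ne_zero) t).hasDerivAt.pow 3
    norm_num at h
    exact h
  have hg'int : ∀ u v : ℝ, IntervalIntegrable (fun t => 3 * f t ^ 2 * deriv f t) volume u v :=
    fun u v => (((continuous_const.mul (hfc.pow 2)).mul hf').intervalIntegrable _ _)
  have hHint : ∀ u v : ℝ, IntervalIntegrable
      (fun t => (3/2*a) * f t + (3/2*M^3/a) * (deriv f t)^2) volume u v :=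
    fun u v => (((continuous_const.mul hfc).add (continuous_const.mul (hf'.pow 2))).intervalIntegrable _ _)
  have hFTC : (∫ t in y..x₀, 3 * f t ^ 2 * deriv f t) = M ^ 3 - f y ^ 3 :=
    intervalIntegral.integral_eq_sub_of_hasDerivAt (fun t _ => hd t) (hg'int y x₀)
  have hHnn : ∀ t, 0 ≤ (3/2*a) * f t + (3/2*M^3/a) * (deriv f t)^2 := by
    intro t
    have := (hfpos t).le
    positivity
  -- bound the FTC integral by the integral of H over [0,1]
  have hsub : ∀ u v : ℝ, u ∈ Icc (0:ℝ) 1 → v ∈ Icc (0:ℝ) 1 → u ≤ v →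
      (∫ t in u..v, 3 * f t ^ 2 * deriv f t)
        ≤ ∫ t in (0:ℝ)..1, ((3/2*a) * f t + (3/2*M^3/a) * (deriv f t)^2) := by
    intro u v hu hv huv
    calc (∫ t in u..v, 3 * f t ^ 2 * deriv f t)
        ≤ ∫ t in u..v, ((3/2*a) * f t + (3/2*M^3/a) * (deriv f t)^2) := by
          apply intervalIntegral.integral_mono_on huv (hg'int u v) (hHint u v)
          intro t ht
          exact (le_abs_self _).trans (key t ⟨hu.1.trans ht.1, ht.2.trans hv.2⟩)
      _ ≤ _ := intervalIntegral.integral_mono_interval hu.1 huv hv.2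
          (Filter.Eventually.of_forall fun t => hHnn t) (hHint 0 1)
  have hneg : ∀ u v : ℝ, u ∈ Icc (0:ℝ) 1 → v ∈ Icc (0:ℝ) 1 → u ≤ v →
      -(∫ t in u..v, 3 * f t ^ 2 * deriv f t)
        ≤ ∫ t in (0:ℝ)..1, ((3/2*a) * f t + (3/2*M^3/a) * (deriv f t)^2) := by
    intro u v hu hv huv
    rw [← intervalIntegral.integral_neg]
    calc (∫ t in u..v, -(3 * f t ^ 2 * deriv f t))
        ≤ ∫ t in u..v, ((3/2*a) * f t + (3/2*M^3/a) * (deriv f t)^2) := by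
          apply intervalIntegral.integral_mono_on huv (hg'int u v).neg (hHint u v)
          intro t ht
          exact (neg_le_abs _).trans (key t ⟨hu.1.trans ht.1, ht.2.trans hv.2⟩)
      _ ≤ _ := intervalIntegral.integral_mono_interval hu.1 huv hv.2
          (Filter.Eventually.of_forall fun t => hHnn t) (hHint 0 1)
  have hmain : M ^ 3 - f y ^ 3
      ≤ ∫ t in (0:ℝ)..1, ((3/2*a) * f t + (3/2*M^3/a) * (deriv f t)^2) := by
    rw [← hFTC]
    rcases le_total y x₀ with h | h
    · exact hsub y x₀ hymem hx₀mem h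
    · rw [intervalIntegral.integral_symm]
      exact hneg x₀ y hx₀mem hymem h
  have hHval : (∫ t in (0:ℝ)..1, ((3/2*a) * f t + (3/2*M^3/a) * (deriv f t)^2))
      = (3/2*a) * I + (3/2*M^3/a) * D := by
    rw [intervalIntegral.integral_add (f := fun t => (3/2*a) * f t) (g := fun t => (3/2*M^3/a) * (deriv f t)^2) ((continuous_const.mul hfc).intervalIntegrable _ _)
      ((continuous_const.mul (hf'.pow 2)).intervalIntegrable _ _),
      intervalIntegral.integral_const_mul, intervalIntegral.integral_const_mul]
  rw [hHval] at hmain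
  -- conclude M^3 ≤ 5 I^3 + 9 D I
  have hDa : (3/2*M^3/a) * D ≤ M^3 / 2 := by
    rw [div_mul_eq_mul_div, div_le_div_iff₀ hapos (by norm_num : (0:ℝ) < 2), ha]
    nlinarith [mul_nonneg (pow_nonneg hMpos.le 3) (sq_nonneg I),
      mul_nonneg (pow_nonneg hMpos.le 3) hD0]
  have hy3 : f y ^ 3 ≤ I ^ 3 := pow_le_pow_left₀ (hfpos y).le hyI 3
  have haI : 3/2*a*I = 9/2*(D*I) + 3/2*I^3 := by rw [ha]; ring
  have hM3 : M ^ 3 ≤ 5 * I ^ 3 + 9 * (D * I) := by linarith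
  -- relate f x to M using periodicity
  have hfx : f x ≤ M := by
    have hfr : f (Int.fract x) = f x := by
      have h0 : f (x - (⌊x⌋:ℝ) * 1) = f x := hper.sub_int_mul_eq ⌊x⌋
      rw [mul_one] at h0
      simp only [Int.fract]
      exact h0
    calc f x = f (Int.fract x) := hfr.symm
      _ ≤ M := hmax _ ⟨Int.fract_nonneg x, (Int.fract_lt_one x).le⟩
  have hfx3 : f x ^ 3 ≤ M ^ 3 := pow_le_pow_left₀ (hfpos x).le hfx 3
  have hΦ : 0 ≤ ∫ t in (0:ℝ)..1, φ (f t) :=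
    intervalIntegral.integral_nonneg zero_le_one (fun u _ => hφ _ (hfpos u))
  have hΦI : 0 ≤ (∫ t in (0:ℝ)..1, φ (f t)) * I := mul_nonneg hΦ hIpos.le
  calc f x ^ 3 ≤ M ^ 3 := hfx3
    _ ≤ 5 * I ^ 3 + 9 * (D * I) := hM3
    _ ≤ 18 * (((1/2) * D + (∫ t in (0:ℝ)..1, φ (f t))) * I + I ^ 3) := by
        nlinarith [hΦI, pow_nonneg hIpos.le 3]
end

section
/- Let g : 𝕋 → ℝ be a C¹ function on the torus with ∫_𝕋 g dx = 0, and let β ∈ (-1/2, 1). Then there is a constant C depending only on β such that sup_{x∈𝕋} |g(x)|^{(β+5)/(β+2)} ≤ C (∫_𝕋 |g'|⁴ dx)^{1/4} (∫_𝕋 |g|^{4/(β+2)} dx)^{3/4}. -/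
open Real MeasureTheory Set

/-- A continuous function with zero integral on an interval has a zero there. -/
lemma stmt4_exists_zero {g : ℝ → ℝ} (hg : Continuous g) {a b : ℝ} (hab : a < b)
    (h : ∫ t in a..b, g t = 0) : ∃ c ∈ Set.Icc a b, g c = 0 := by
  by_contra hcon
  push_neg at hcon
  have hint : IntervalIntegrable g MeasureTheory.volume a b := hg.intervalIntegrable a b
  have ha : a ∈ Set.Icc a b := ⟨le_refl a, hab.le⟩
  rcases lt_or_gt_of_ne (hcon a ha) with hneg | hpos
  · have hall : ∀ t ∈ Set.Icc a b, g t < 0 := by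
      intro t ht
      rcases lt_or_gt_of_ne (hcon t ht) with h' | h'
      · exact h'
      · exfalso
        have h0 : (0:ℝ) ∈ Set.uIcc (g a) (g t) := by
          rw [Set.mem_uIcc]; left; exact ⟨hneg.le, h'.le⟩
        obtain ⟨c, hc, hc0⟩ := intermediate_value_uIcc (hg.continuousOn (s := Set.uIcc a t)) h0
        exact hcon c (Set.uIcc_subset_Icc ha ht hc) hc0
    have hlt : (0:ℝ) < ∫ t in a..b, -g t := by
      apply intervalIntegral.intervalIntegral_pos_of_pos_on hint.neg ?_ hab
      intro t ht
      exact neg_pos.2 (hall t ⟨ht.1.le, ht.2.le⟩)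
    rw [intervalIntegral.integral_neg, h] at hlt
    simp at hlt
  · have hall : ∀ t ∈ Set.Icc a b, 0 < g t := by
      intro t ht
      rcases lt_or_gt_of_ne (hcon t ht) with h' | h'
      · exfalso
        have h0 : (0:ℝ) ∈ Set.uIcc (g a) (g t) := by
          rw [Set.mem_uIcc]; right; exact ⟨h'.le, hpos.le⟩
        obtain ⟨c, hc, hc0⟩ := intermediate_value_uIcc (hg.continuousOn (s := Set.uIcc a t)) h0
        exact hcon c (Set.uIcc_subset_Icc ha ht hc) hc0
      · exact h'
    have hlt : (0:ℝ) < ∫ t in a..b, g t := by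
      apply intervalIntegral.intervalIntegral_pos_of_pos_on hint ?_ hab
      intro t ht
      exact hall t ⟨ht.1.le, ht.2.le⟩
    rw [h] at hlt
    exact lt_irrefl _ hlt

/-- A continuous function is in every `Memℒp` space on a bounded interval. -/
lemma stmt4_memLp {f : ℝ → ℝ} (hf : Continuous f) (r : ENNReal) :
    MeasureTheory.MemLp f r (MeasureTheory.volume.restrict (Set.Ioc (0:ℝ) 1)) := by
  have hfin : MeasureTheory.IsFiniteMeasure
      (MeasureTheory.volume.restrict (Set.Ioc (0:ℝ) 1)) := by
    constructor
    rw [MeasureTheory.Measure.restrict_apply_univ]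
    simp [Real.volume_Ioc]
  obtain ⟨M, hM⟩ := (isCompact_Icc (a := (0:ℝ)) (b := 1)).exists_bound_of_continuousOn
    hf.continuousOn
  exact MeasureTheory.MemLp.of_bound hf.aestronglyMeasurable M
    (((MeasureTheory.ae_restrict_mem measurableSet_Ioc).mono
      (fun y hy => hM y (Set.Ioc_subset_Icc_self hy))))

/-- for mean-free C¹ functions on the torus,
`sup |g|^((β+5)/(β+2)) ≤ C (∫ |g'|⁴)^(1/4) (∫ |g|^(4/(β+2)))^(3/4)`. -/
theorem stmt4 (β : ℝ) (hβ : β ∈ Set.Ioo (-(1:ℝ)/2) 1) :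
    ∃ C > (0:ℝ), ∀ g : ℝ → ℝ, ContDiff ℝ 1 g → Function.Periodic g 1 →
      (∫ x in (0:ℝ)..1, g x) = 0 →
      ∀ x : ℝ, |g x| ^ ((β + 5)/(β + 2)) ≤
        C * (∫ x in (0:ℝ)..1, |deriv g x| ^ 4) ^ ((1:ℝ)/4) *
          (∫ x in (0:ℝ)..1, |g x| ^ ((4:ℝ)/(β + 2))) ^ ((3:ℝ)/4) := by
  obtain ⟨hβl, hβr⟩ := hβ
  have hb2 : (0:ℝ) < β + 2 := by linarith
  set p : ℝ := (β + 5)/(β + 2) with hp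
  set q : ℝ := 3/(β + 2) with hq
  have hq1 : 1 < q := by rw [hq, lt_div_iff₀ hb2]; linarith
  have hpq : p = q + 1 := by rw [hp, hq]; field_simp; ring
  have hp2 : 2 < p := by rw [hpq]; linarith
  have hp3 : p ≤ 3 := by rw [hp, div_le_iff₀ hb2]; linarith
  have hp0 : 0 < p := by linarith
  refine ⟨3, by norm_num, ?_⟩
  intro g hg hper hmean x
  have hgc : Continuous g := hg.continuous
  have hgd' : Continuous (deriv g) := hg.continuous_deriv le_rfl
  have hgd : ∀ t, HasDerivAt g (deriv g t) t :=
    fun t => ((hg.differentiable one_ne_zero) t).hasDerivAt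
  -- derivative of the auxiliary function h t = (g t ^ 2) ^ (p/2)
  set Hv : ℝ → ℝ := fun t => p * (g t ^ 2) ^ (p/2 - 1) * (g t * deriv g t) with hHv
  have hh : ∀ t, HasDerivAt (fun s => (g s ^ 2) ^ (p/2)) (Hv t) t := by
    intro t
    have hsq : HasDerivAt (fun s => g s ^ 2) ((2:ℕ) * g t ^ 1 * deriv g t) t := (hgd t).pow 2
    have h1 : HasDerivAt (fun u : ℝ => u ^ (p/2)) ((p/2) * (g t ^ 2) ^ (p/2 - 1)) (g t ^ 2) :=
      Real.hasDerivAt_rpow_const (Or.inr (by linarith))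
    have := h1.comp t hsq
    refine this.congr_deriv ?_
    rw [hHv]
    simp only [pow_one, Nat.cast_ofNat]
    ring
  have hHvc : Continuous Hv := by
    apply Continuous.mul
    · exact continuous_const.mul ((hgc.pow 2).rpow_const fun t => Or.inr (by linarith))
    · exact hgc.mul hgd'
  -- existence of a zero of g in [x-1, x]
  have hmean' : ∫ t in (x-1)..x, g t = 0 := by
    have h2 : ∫ t in (x-1)..x, g t = ∫ t in (0:ℝ)..1, g t := by
      simpa using hper.intervalIntegral_add_eq (x-1) 0
    rw [h2]; exact hmean
  obtain ⟨x₀, hx₀mem, hx₀⟩ := stmt4_exists_zero hgc (by linarith : x - 1 < x) hmean'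
  -- FTC
  have hFTC : (g x ^ 2) ^ (p/2) = ∫ t in x₀..x, Hv t := by
    have := intervalIntegral.integral_eq_sub_of_hasDerivAt
      (f := fun s => (g s ^ 2) ^ (p/2)) (fun t _ => hh t)
      (hHvc.intervalIntegrable x₀ x)
    rw [this]
    beta_reduce
    rw [hx₀, show ((0:ℝ)^2 : ℝ) = 0 by norm_num,
      Real.zero_rpow (ne_of_gt (by linarith : (0:ℝ) < p/2))]
    ring
  -- |g x| ^ p = (g x ^ 2) ^ (p/2)
  have habs : ∀ y : ℝ, (y ^ 2) ^ (p/2) = |y| ^ p := by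
    intro y
    rw [← sq_abs, ← Real.rpow_natCast |y| 2, ← Real.rpow_mul (abs_nonneg y)]
    congr 1
    push_cast
    ring
  -- pointwise formula for |Hv|
  have habsH : ∀ t, |Hv t| = p * (|deriv g t| * |g t| ^ q) := by
    intro t
    have hkey : (g t ^ 2) ^ (p/2 - 1) * |g t| = |g t| ^ q := by
      rcases eq_or_ne (g t) 0 with h0 | h0
      · rw [h0]
        simp [Real.zero_rpow (by positivity : q ≠ 0)]
      · rw [← sq_abs, ← Real.rpow_natCast |g t| 2, ← Real.rpow_mul (abs_nonneg _)]
        rw [← Real.rpow_add_one (abs_ne_zero.mpr h0)]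
        congr 1
        push_cast
        rw [hpq]; ring
    rw [hHv]
    simp only
    rw [abs_mul, abs_mul, abs_of_nonneg hp0.le,
      abs_of_nonneg (Real.rpow_nonneg (sq_nonneg _) _), abs_mul]
    rw [← hkey]; ring
  -- Hv periodic in absolute value
  have hpd : Function.Periodic (deriv g) 1 := by
    intro t
    have h1 : deriv (fun s => g (s + 1)) t = deriv g (t + 1) := by
      rw [deriv_comp_add_const]
    rw [← h1]
    congr 1
    funext s
    exact hper s
  have hKper : Function.Periodic (fun t => |Hv t|) 1 := by
    intro t
    simp only [hHv, hper t, hpd t]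
  -- chain of inequalities to ∫₀¹ |Hv|
  have hx01 : x₀ ≤ x := hx₀mem.2
  have step1 : ∫ t in x₀..x, Hv t ≤ ∫ t in x₀..x, |Hv t| :=
    (le_abs_self _).trans (intervalIntegral.abs_integral_le_integral_abs hx01)
  have step2 : ∫ t in x₀..x, |Hv t| ≤ ∫ t in (x-1)..x, |Hv t| := by
    have hsplit : (∫ t in (x-1)..x₀, |Hv t|) + ∫ t in x₀..x, |Hv t|
        = ∫ t in (x-1)..x, |Hv t| :=
      intervalIntegral.integral_add_adjacent_intervals
        (hHvc.abs.intervalIntegrable _ _) (hHvc.abs.intervalIntegrable _ _)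
    have hnn : 0 ≤ ∫ t in (x-1)..x₀, |Hv t| :=
      intervalIntegral.integral_nonneg hx₀mem.1 (fun t _ => abs_nonneg _)
    linarith
  have step3 : ∫ t in (x-1)..x, |Hv t| = ∫ t in (0:ℝ)..1, |Hv t| := by
    simpa using hKper.intervalIntegral_add_eq (x-1) 0
  have step4 : ∫ t in (0:ℝ)..1, |Hv t| = p * ∫ t in (0:ℝ)..1, |deriv g t| * |g t| ^ q := by
    rw [← intervalIntegral.integral_const_mul]
    exact intervalIntegral.integral_congr (fun t _ => habsH t)
  -- Hölder's inequality
  set μ := MeasureTheory.volume.restrict (Set.Ioc (0:ℝ) 1) with hμ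
  have hgq_cont : Continuous (fun t => |g t| ^ q) :=
    hgc.abs.rpow_const fun t => Or.inr (by linarith)
  have hHolder : ∫ t in (0:ℝ)..1, |deriv g t| * |g t| ^ q ≤
      (∫ t in (0:ℝ)..1, |deriv g t| ^ (4:ℝ)) ^ ((1:ℝ)/4) *
        (∫ t in (0:ℝ)..1, (|g t| ^ q) ^ ((4:ℝ)/3)) ^ ((3:ℝ)/4) := by
    have hconj : Real.HolderConjugate 4 (4/3) := ⟨by norm_num, by norm_num, by norm_num⟩
    have h := MeasureTheory.integral_mul_le_Lp_mul_Lq_of_nonneg (μ := μ) hconj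
      (f := fun t => |deriv g t|) (g := fun t => |g t| ^ q)
      (Filter.Eventually.of_forall fun t => abs_nonneg _)
      (Filter.Eventually.of_forall fun t => Real.rpow_nonneg (abs_nonneg _) _)
      (stmt4_memLp hgd'.abs _) (stmt4_memLp hgq_cont _)
    rw [intervalIntegral.integral_of_le zero_le_one,
      intervalIntegral.integral_of_le zero_le_one,
      intervalIntegral.integral_of_le zero_le_one]
    convert h using 3 <;> norm_num
  -- rewrite the two integrals on the right
  have hR1 : ∫ t in (0:ℝ)..1, |deriv g t| ^ (4:ℝ) = ∫ t in (0:ℝ)..1, |deriv g t| ^ 4 := by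
    apply intervalIntegral.integral_congr
    intro t _
    show |deriv g t| ^ (4:ℝ) = |deriv g t| ^ (4:ℕ)
    rw [show (4:ℝ) = ((4:ℕ):ℝ) by norm_num, Real.rpow_natCast]
  have hR2 : ∫ t in (0:ℝ)..1, (|g t| ^ q) ^ ((4:ℝ)/3)
      = ∫ t in (0:ℝ)..1, |g t| ^ ((4:ℝ)/(β + 2)) := by
    apply intervalIntegral.integral_congr
    intro t _
    show (|g t| ^ q) ^ ((4:ℝ)/3) = |g t| ^ ((4:ℝ)/(β + 2))
    rw [← Real.rpow_mul (abs_nonneg _)]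
    congr 1
    rw [hq]
    field_simp
  -- nonnegativity of the right-hand side factors
  have hA : 0 ≤ ∫ t in (0:ℝ)..1, |deriv g t| ^ 4 :=
    intervalIntegral.integral_nonneg zero_le_one (fun t _ => by positivity)
  have hB : 0 ≤ ∫ t in (0:ℝ)..1, |g t| ^ ((4:ℝ)/(β + 2)) :=
    intervalIntegral.integral_nonneg zero_le_one
      (fun t _ => Real.rpow_nonneg (abs_nonneg _) _)
  have hRHS : 0 ≤ (∫ t in (0:ℝ)..1, |deriv g t| ^ 4) ^ ((1:ℝ)/4) *
      (∫ t in (0:ℝ)..1, |g t| ^ ((4:ℝ)/(β + 2))) ^ ((3:ℝ)/4) :=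
    mul_nonneg (Real.rpow_nonneg hA _) (Real.rpow_nonneg hB _)
  rw [hR1, hR2] at hHolder
  calc |g x| ^ p = (g x ^ 2) ^ (p/2) := (habs (g x)).symm
    _ = ∫ t in x₀..x, Hv t := hFTC
    _ ≤ ∫ t in (0:ℝ)..1, |Hv t| := by
        calc ∫ t in x₀..x, Hv t ≤ ∫ t in x₀..x, |Hv t| := step1
          _ ≤ ∫ t in (x-1)..x, |Hv t| := step2
          _ = ∫ t in (0:ℝ)..1, |Hv t| := step3
    _ = p * ∫ t in (0:ℝ)..1, |deriv g t| * |g t| ^ q := step4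
    _ ≤ p * ((∫ t in (0:ℝ)..1, |deriv g t| ^ 4) ^ ((1:ℝ)/4) *
        (∫ t in (0:ℝ)..1, |g t| ^ ((4:ℝ)/(β + 2))) ^ ((3:ℝ)/4)) :=
      mul_le_mul_of_nonneg_left hHolder hp0.le
    _ ≤ 3 * ((∫ t in (0:ℝ)..1, |deriv g t| ^ 4) ^ ((1:ℝ)/4) *
        (∫ t in (0:ℝ)..1, |g t| ^ ((4:ℝ)/(β + 2))) ^ ((3:ℝ)/4)) :=
      mul_le_mul_of_nonneg_right hp3 hRHS
    _ = 3 * (∫ t in (0:ℝ)..1, |deriv g t| ^ 4) ^ ((1:ℝ)/4) *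
        (∫ t in (0:ℝ)..1, |g t| ^ ((4:ℝ)/(β + 2))) ^ ((3:ℝ)/4) := by ring
end
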